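/- arXiv:2510.09925 — 3 statements merged into one kernel-verified Lean document; each statement's English description precedes it below -/
import Mathlib

section
/- Let S ⊆ ℝⁿ, let p ≥ 1, and let H : ℝⁿ × ℝⁿ → (real symmetric p×p matrices) satisfy: (i) for every x ∈ ℝⁿ, the set { z ∈ ℝⁿ : H(z, x) is positive semidefinite } is contained in S, and (ii) H(x, x) is positive semidefinite for every x ∈ S. Let 0 < γ ≤ 1 and let (x_k)_{k≥0} be a sequence in ℝⁿ with x_0 ∈ S such that for every k ≥ 0 the matrix H(x_{k+1}, x_k) − (1−γ)·H(x_k, x_k) is positive semidefinite. Then x_k ∈ S for every k ≥ 0, and moreover H(x_{k+1}, x_k) is positive semidefinite for every k ≥ 0. -/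
/-- Forward invariance under the SDTE-MCBF condition given a safe subset
function `H`. -/
theorem sdte_mcbf_forward_invariance
    (n p : ℕ) (hp : 1 ≤ p) (S : Set (Fin n → ℝ))
    (H : (Fin n → ℝ) → (Fin n → ℝ) → Matrix (Fin p) (Fin p) ℝ)
    (hsymm : ∀ z x, (H z x).IsHermitian)
    (hsub : ∀ x : Fin n → ℝ, {z : Fin n → ℝ | (H z x).PosSemidef} ⊆ S)
    (hself : ∀ x ∈ S, (H x x).PosSemidef)
    (γ : ℝ) (hγ0 : 0 < γ) (hγ1 : γ ≤ 1)
    (x : ℕ → (Fin n → ℝ)) (hx0 : x 0 ∈ S)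
    (hstep : ∀ k, (H (x (k + 1)) (x k) - (1 - γ) • H (x k) (x k)).PosSemidef) :
    (∀ k, x k ∈ S) ∧ (∀ k, (H (x (k + 1)) (x k)).PosSemidef) := by
  have key : ∀ k, x k ∈ S → (H (x (k + 1)) (x k)).PosSemidef := by
    intro k hk
    have h1 : (0:ℝ) ≤ 1 - γ := by linarith
    have hsm : ((1 - γ) • H (x k) (x k)).PosSemidef := by
      refine ⟨?_, fun v => ?_⟩
      · have h := (hself _ hk).1
        unfold Matrix.IsHermitian at *
        rw [Matrix.conjTranspose_smul, h]
        simp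
      · have := (hself _ hk).2 v
        exact ((hself _ hk).smul h1).2 v
    have h2 := (hstep k).add hsm
    simpa using h2
  have hmem : ∀ k, x k ∈ S := by
    intro k
    induction k with
    | zero => exact hx0
    | succ m ih => exact hsub (x m) (key m ih)
  exact ⟨hmem, fun k => key k (hmem k)⟩
end

section
/- Let C₁, …, C_Q ⊆ ℝⁿ be nonempty closed convex sets, let S̄ = C₁ ∪ ⋯ ∪ C_Q, and let ε > 0. Let x ∈ ℝⁿ satisfy x ∉ C_i for all i; let P_i be the metric projection of x onto C_i and define a_i = (x − P_i)/‖x − P_i‖ and b_i = ε + ⟨a_i, P_i⟩. Then: (1) every z ∈ ℝⁿ with ⟨a_i, z⟩ ≥ b_i for all i satisfies dist(z, C_i) ≥ ε for all i, hence dist(z, S̄) ≥ ε; and (2) if dist(x, C_i) ≥ ε for all i, then ⟨a_i, x⟩ ≥ b_i for all i. -/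
set_option maxHeartbeats 1000000


open scoped RealInnerProductSpace

/-- The projection-based halfspace construction yields a safe subset function
for the eroded safe set: (1) points satisfying all halfspace constraints are
at distance at least `ε` from every obstacle and from their union; (2) if `x`
is at distance at least `ε` from every obstacle then `x` satisfies all of its
own halfspace constraints. -/
theorem projection_safe_subset_function
    (n Q : ℕ) (hQ : 0 < Q) (C : Fin Q → Set (EuclideanSpace ℝ (Fin n)))
    (hne : ∀ i, (C i).Nonempty) (hcl : ∀ i, IsClosed (C i))
    (hconv : ∀ i, Convex ℝ (C i))
    (ε : ℝ) (hε : 0 < ε)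
    (x : EuclideanSpace ℝ (Fin n)) (hx : ∀ i, x ∉ C i)
    (P : Fin Q → EuclideanSpace ℝ (Fin n))
    (hP : ∀ i, P i ∈ C i) (hPmin : ∀ i, ∀ z ∈ C i, ‖P i - x‖ ≤ ‖z - x‖) :
    (∀ z : EuclideanSpace ℝ (Fin n),
        (∀ i, ε + ⟪(‖x - P i‖)⁻¹ • (x - P i), P i⟫
            ≤ ⟪(‖x - P i‖)⁻¹ • (x - P i), z⟫) →
        (∀ i, ε ≤ Metric.infDist z (C i)) ∧ ε ≤ Metric.infDist z (⋃ i, C i)) ∧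
    ((∀ i, ε ≤ Metric.infDist x (C i)) →
        ∀ i, ε + ⟪(‖x - P i‖)⁻¹ • (x - P i), P i⟫
            ≤ ⟪(‖x - P i‖)⁻¹ • (x - P i), x⟫) := by
  have hxP : ∀ i, x - P i ≠ 0 := by
    intro i h
    exact hx i (by simpa [sub_eq_zero.mp h] using hP i)
  have hnorm : ∀ i, (0:ℝ) < ‖x - P i‖ := fun i => norm_pos_iff.mpr (hxP i)
  -- obtuse angle property
  have hobtuse : ∀ i, ∀ w ∈ C i, ⟪x - P i, w - P i⟫ ≤ 0 := by
    intro i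
    haveI : Nonempty (C i) := (hne i).to_subtype
    have heq : ‖x - P i‖ = ⨅ w : C i, ‖x - (w:EuclideanSpace ℝ (Fin n))‖ := by
      apply le_antisymm
      · apply le_ciInf
        intro w
        have := hPmin i w w.2
        rwa [norm_sub_rev (P i) x, norm_sub_rev (w:EuclideanSpace ℝ (Fin n)) x] at this
      · have hbdd : BddBelow (Set.range fun w : C i => ‖x - (w:EuclideanSpace ℝ (Fin n))‖) := by
          refine ⟨0, ?_⟩
          rintro r ⟨w, rfl⟩
          exact norm_nonneg _
        exact ciInf_le hbdd ⟨P i, hP i⟩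
    exact (norm_eq_iInf_iff_real_inner_le_zero (hconv i) (hP i)).mp heq
  have key : ∀ i, ∀ w ∈ C i, ∀ z : EuclideanSpace ℝ (Fin n),
      ε + ⟪(‖x - P i‖)⁻¹ • (x - P i), P i⟫ ≤ ⟪(‖x - P i‖)⁻¹ • (x - P i), z⟫ →
      ε ≤ dist z w := by
    intro i w hw z hz
    set a : EuclideanSpace ℝ (Fin n) := (‖x - P i‖)⁻¹ • (x - P i) with ha
    have hna : ‖a‖ = 1 := by
      rw [ha, norm_smul, norm_inv, norm_norm, inv_mul_cancel₀ (hnorm i).ne']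
    have h1 : ⟪a, w - P i⟫ ≤ 0 := by
      rw [ha, real_inner_smul_left]
      exact mul_nonpos_of_nonneg_of_nonpos (inv_nonneg.mpr (norm_nonneg _))
        (hobtuse i w hw)
    have h2 : ε ≤ ⟪a, z - w⟫ := by
      have : ⟪a, z - w⟫ = ⟪a, z⟫ - ⟪a, P i⟫ - ⟪a, w - P i⟫ := by
        rw [inner_sub_right, inner_sub_right]; ring
      rw [this]
      linarith [hz]
    have h3 : ⟪a, z - w⟫ ≤ ‖z - w‖ := by
      calc ⟪a, z - w⟫ ≤ ‖a‖ * ‖z - w‖ := real_inner_le_norm a (z - w)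
        _ = ‖z - w‖ := by rw [hna, one_mul]
    rw [dist_eq_norm]
    linarith
  constructor
  · intro z hz
    have hall : ∀ i, ε ≤ Metric.infDist z (C i) := by
      intro i
      haveI : Nonempty (C i) := (hne i).to_subtype
      rw [Metric.infDist_eq_iInf]
      apply le_ciInf
      intro w
      exact key i w w.2 z (hz i)
    refine ⟨hall, ?_⟩
    have : (⋃ i, C i).Nonempty := by
      obtain ⟨i⟩ := Fin.pos_iff_nonempty.mp hQ
      exact (hne i).mono (Set.subset_iUnion C i)
    haveI : Nonempty (⋃ i, C i) := this.to_subtype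
    rw [Metric.infDist_eq_iInf]
    apply le_ciInf
    rintro ⟨w, hw⟩
    obtain ⟨_, ⟨i, rfl⟩, hwi⟩ := hw
    exact key i w hwi z (hz i)
  · intro hdist i
    set a : EuclideanSpace ℝ (Fin n) := (‖x - P i‖)⁻¹ • (x - P i) with ha
    have h1 : ⟪a, x⟫ - ⟪a, P i⟫ = ‖x - P i‖ := by
      rw [ha, real_inner_smul_left, real_inner_smul_left,
        ← mul_sub, ← inner_sub_right, real_inner_self_eq_norm_sq]
      field_simp
    have h2 : ε ≤ ‖x - P i‖ := by
      calc ε ≤ Metric.infDist x (C i) := hdist i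
        _ ≤ dist x (P i) := Metric.infDist_le_dist_of_mem (hP i)
        _ = ‖x - P i‖ := dist_eq_norm x (P i)
    linarith
end

section
/- Let 0 < γ ≤ 1, let 1 ≤ j ≤ p, and let (H_k)_{k≥0} be a sequence of real symmetric p×p matrices such that for every k ≥ 0 the matrix H_{k+1} − H_k + γ·λ_j(H_k)·I is positive semidefinite, where λ_j denotes the j-th smallest eigenvalue and I is the p×p identity. Then λ_j(H_k) ≥ (1−γ)^k · λ_j(H_0) for every k ≥ 0. In particular, if λ_j(H_0) ≥ 0 then λ_j(H_k) ≥ 0 for every k ≥ 0. -/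
/-- The eigenvalues of a Hermitian matrix listed in nondecreasing order. -/
noncomputable def sortedEigenvalues {p : ℕ} {A : Matrix (Fin p) (Fin p) ℝ}
    (hA : A.IsHermitian) : Fin p → ℝ :=
  fun i => hA.eigenvalues (Tuple.sort hA.eigenvalues i)

open Matrix Module

namespace SafeSetAux

variable {p : ℕ} {A : Matrix (Fin p) (Fin p) ℝ}

noncomputable abbrev eb (hA : A.IsHermitian) := hA.eigenvectorBasis

lemma teuclid_eb (hA : A.IsHermitian) (k : Fin p) :
    Matrix.toEuclideanLin A (eb hA k) = hA.eigenvalues k • eb hA k := by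
  have h := hA.mulVec_eigenvectorBasis k
  apply (WithLp.equiv 2 (Fin p → ℝ)).injective
  ext i
  simp only [toEuclideanLin_apply]
  have := congrFun h i
  simpa using this

lemma repr_teuclid (hA : A.IsHermitian) (x : EuclideanSpace ℝ (Fin p)) (k : Fin p) :
    (eb hA).repr (Matrix.toEuclideanLin A x) k = hA.eigenvalues k * (eb hA).repr x k := by
  have hsym : LinearMap.IsSymmetric (Matrix.toEuclideanLin A) :=
    Matrix.isHermitian_iff_isSymmetric.mp hA
  rw [OrthonormalBasis.repr_apply_apply, OrthonormalBasis.repr_apply_apply,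
    ← hsym (eb hA k) x, teuclid_eb hA k, real_inner_smul_left]

lemma inner_teuclid_eq_sum (hA : A.IsHermitian) (x : EuclideanSpace ℝ (Fin p)) :
    (inner ℝ x (Matrix.toEuclideanLin A x) : ℝ)
      = ∑ k, hA.eigenvalues k * ((eb hA).repr x k) ^ 2 := by
  rw [← (eb hA).repr.inner_map_map x (Matrix.toEuclideanLin A x), PiLp.inner_apply]
  simp [repr_teuclid hA x, sq]
  ring_nf

lemma inner_self_eq_sum (hA : A.IsHermitian) (x : EuclideanSpace ℝ (Fin p)) :
    (inner ℝ x x : ℝ) = ∑ k, ((eb hA).repr x k) ^ 2 := by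
  rw [← (eb hA).repr.inner_map_map x x, PiLp.inner_apply]
  simp [sq]

lemma repr_eq_zero_of_not_mem (hA : A.IsHermitian) (S : Set (Fin p))
    (x : EuclideanSpace ℝ (Fin p)) (hx : x ∈ Submodule.span ℝ (eb hA '' S))
    (k : Fin p) (hk : k ∉ S) : (eb hA).repr x k = 0 := by
  rw [OrthonormalBasis.repr_apply_apply]
  induction hx using Submodule.span_induction with
  | mem y hy =>
      obtain ⟨l, hl, rfl⟩ := hy
      exact (eb hA).orthonormal.2 (fun h => hk (h ▸ hl))
  | zero => exact inner_zero_right _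
  | add y z _ _ hy hz => rw [inner_add_right, hy, hz, add_zero]
  | smul a y _ hy => rw [real_inner_smul_right, hy, mul_zero]

lemma finrank_span_eb (hA : A.IsHermitian) (S : Finset (Fin p)) :
    finrank ℝ (Submodule.span ℝ (eb hA '' ↑S)) = S.card := by
  have hli : LinearIndependent ℝ (fun s : ↥S => eb hA s) :=
    (eb hA).orthonormal.linearIndependent.comp Subtype.val Subtype.val_injective
  have hr : Set.range (fun s : ↥S => eb hA s) = eb hA '' ↑S := by
    ext y; simp [Set.mem_image]
  rw [← hr, finrank_span_eq_card hli, Fintype.card_coe]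

/-- Weyl-type shift inequality: if `A - B + c•1 ⪰ 0` then
`λ_j(B) - c ≤ λ_j(A)` for sorted eigenvalues. -/
lemma weyl_shift {A B : Matrix (Fin p) (Fin p) ℝ}
    (hA : A.IsHermitian) (hB : B.IsHermitian) (c : ℝ)
    (h : (A - B + c • (1 : Matrix (Fin p) (Fin p) ℝ)).PosSemidef) (j : Fin p) :
    sortedEigenvalues hB j - c ≤ sortedEigenvalues hA j := by
  classical
  set σA := Tuple.sort hA.eigenvalues with hσA
  set σB := Tuple.sort hB.eigenvalues with hσB
  set SA : Finset (Fin p) := (Finset.Iic j).map σA.toEmbedding with hSA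
  set SB : Finset (Fin p) := (Finset.Ici j).map σB.toEmbedding with hSB
  set U := Submodule.span ℝ (eb hA '' ↑SA) with hU
  set W := Submodule.span ℝ (eb hB '' ↑SB) with hW
  have hcardA : SA.card = (j : ℕ) + 1 := by rw [hSA, Finset.card_map, Fin.card_Iic]
  have hcardB : SB.card = p - (j : ℕ) := by rw [hSB, Finset.card_map, Fin.card_Ici]
  have hdU : finrank ℝ U = (j : ℕ) + 1 := by rw [hU, finrank_span_eb, hcardA]
  have hdW : finrank ℝ W = p - (j : ℕ) := by rw [hW, finrank_span_eb, hcardB]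
  have hsum := Submodule.finrank_sup_add_finrank_inf_eq U W
  have hle : finrank ℝ ↥(U ⊔ W) ≤ p := by
    simpa [finrank_euclideanSpace] using
      Submodule.finrank_le (U ⊔ W)
  have hjp : (j : ℕ) < p := j.isLt
  have hpos : 0 < finrank ℝ ↥(U ⊓ W) := by omega
  have hne : U ⊓ W ≠ ⊥ := by
    intro hbot
    rw [hbot, finrank_bot] at hpos
    exact lt_irrefl 0 hpos
  obtain ⟨x, hxmem, hx0⟩ := Submodule.exists_mem_ne_zero_of_ne_bot hne
  have hxU : x ∈ U := hxmem.1
  have hxW : x ∈ W := hxmem.2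
  -- Rayleigh bounds
  have hA_bound : (inner ℝ x (Matrix.toEuclideanLin A x) : ℝ)
      ≤ sortedEigenvalues hA j * (inner ℝ x x : ℝ) := by
    rw [inner_teuclid_eq_sum hA, inner_self_eq_sum hA, Finset.mul_sum]
    apply Finset.sum_le_sum
    intro k _
    by_cases hk : k ∈ SA
    · obtain ⟨m, hm, rfl⟩ := Finset.mem_map.mp hk
      have hmono := Tuple.monotone_sort hA.eigenvalues (Finset.mem_Iic.mp hm)
      have : hA.eigenvalues (σA.toEmbedding m) ≤ sortedEigenvalues hA j := hmono
      exact mul_le_mul_of_nonneg_right this (sq_nonneg _)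
    · rw [repr_eq_zero_of_not_mem hA (↑SA) x hxU k (by simpa using hk)]
      simp
  have hB_bound : sortedEigenvalues hB j * (inner ℝ x x : ℝ)
      ≤ (inner ℝ x (Matrix.toEuclideanLin B x) : ℝ) := by
    rw [inner_teuclid_eq_sum hB, inner_self_eq_sum hB, Finset.mul_sum]
    apply Finset.sum_le_sum
    intro k _
    by_cases hk : k ∈ SB
    · obtain ⟨m, hm, rfl⟩ := Finset.mem_map.mp hk
      have hmono := Tuple.monotone_sort hB.eigenvalues (Finset.mem_Ici.mp hm)
      have : sortedEigenvalues hB j ≤ hB.eigenvalues (σB.toEmbedding m) := hmono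
      exact mul_le_mul_of_nonneg_right this (sq_nonneg _)
    · rw [repr_eq_zero_of_not_mem hB (↑SB) x hxW k (by simpa using hk)]
      simp
  -- PSD gives the combined inequality
  set xf : Fin p → ℝ := (WithLp.equiv 2 (Fin p → ℝ)) x with hxf
  have hbridge : ∀ M : Matrix (Fin p) (Fin p) ℝ,
      (inner ℝ x (Matrix.toEuclideanLin M x) : ℝ) = star xf ⬝ᵥ (M *ᵥ xf) := by
    intro M
    rw [PiLp.inner_apply]
    simp [toEuclideanLin_apply, dotProduct, hxf]
    exact Finset.sum_congr rfl fun i _ => mul_comm _ _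
  have hpsd := h.dotProduct_mulVec_nonneg xf
  have hexp : star xf ⬝ᵥ ((A - B + c • (1 : Matrix (Fin p) (Fin p) ℝ)) *ᵥ xf)
      = (inner ℝ x (Matrix.toEuclideanLin A x) : ℝ)
        - (inner ℝ x (Matrix.toEuclideanLin B x) : ℝ) + c * (inner ℝ x x : ℝ) := by
    rw [hbridge A, hbridge B]
    have hxx : (inner ℝ x x : ℝ) = star xf ⬝ᵥ xf := by
      rw [PiLp.inner_apply]; simp [dotProduct, hxf, sq]
    rw [hxx]
    simp [Matrix.add_mulVec, Matrix.sub_mulVec, Matrix.smul_mulVec,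
      dotProduct_add, dotProduct_sub, dotProduct_smul, smul_eq_mul]
  rw [hexp] at hpsd
  have hxx_pos : (0 : ℝ) < (inner ℝ x x : ℝ) := by
    rw [real_inner_self_eq_norm_sq]
    exact pow_pos (norm_pos_iff.mpr hx0) 2
  nlinarith [hA_bound, hB_bound, hpsd, hxx_pos]

end SafeSetAux

/-- Indefinite matrix safe sets: under the condition
`H_{k+1} - H_k + γ·λ_j(H_k)·I ⪰ 0`, the `j`-th smallest eigenvalue satisfies
`λ_j(H_k) ≥ (1-γ)^k λ_j(H_0)`; in particular it stays nonnegative if it starts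
nonnegative. -/
theorem indefinite_safe_set_invariance
    (p : ℕ) (γ : ℝ) (hγ0 : 0 < γ) (hγ1 : γ ≤ 1) (j : Fin p)
    (H : ℕ → Matrix (Fin p) (Fin p) ℝ)
    (hH : ∀ k, (H k).IsHermitian)
    (hstep : ∀ k, (H (k + 1) - H k + (γ * sortedEigenvalues (hH k) j) •
        (1 : Matrix (Fin p) (Fin p) ℝ)).PosSemidef) :
    (∀ k, (1 - γ) ^ k * sortedEigenvalues (hH 0) j ≤ sortedEigenvalues (hH k) j) ∧
    (0 ≤ sortedEigenvalues (hH 0) j → ∀ k, 0 ≤ sortedEigenvalues (hH k) j) := by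
  have key : ∀ k, (1 - γ) * sortedEigenvalues (hH k) j ≤ sortedEigenvalues (hH (k + 1)) j := by
    intro k
    have := SafeSetAux.weyl_shift (hH (k + 1)) (hH k)
      (γ * sortedEigenvalues (hH k) j) (hstep k) j
    linarith
  have main : ∀ k, (1 - γ) ^ k * sortedEigenvalues (hH 0) j ≤ sortedEigenvalues (hH k) j := by
    intro k
    induction k with
    | zero => simp
    | succ k ih =>
        calc (1 - γ) ^ (k + 1) * sortedEigenvalues (hH 0) j
            = (1 - γ) * ((1 - γ) ^ k * sortedEigenvalues (hH 0) j) := by ring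
          _ ≤ (1 - γ) * sortedEigenvalues (hH k) j :=
              mul_le_mul_of_nonneg_left ih (by linarith)
          _ ≤ sortedEigenvalues (hH (k + 1)) j := key k
  refine ⟨main, fun h0 k => ?_⟩
  have h1 : (0 : ℝ) ≤ (1 - γ) ^ k * sortedEigenvalues (hH 0) j :=
    mul_nonneg (pow_nonneg (by linarith) k) h0
  linarith [main k]
end
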